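/- Let (a_n)_{n≥0} be a sequence of real numbers such that a_n ≥ 0 for all but finitely many n, and suppose that T := limsup_{n→∞} |a_n|^{1/n} is finite and strictly positive. Define G(t) = ∑_{n≥0} a_n t^n / n! (the series converges for every real t). Then G(t) > 0 for all sufficiently large t > 0, and limsup_{t→+∞} (log G(t))/t = T. -/

import Mathlib

open Filter

set_option maxHeartbeats 1000000

private lemma aux_exp_tsum (x : ℝ) : Real.exp x = ∑' n : ℕ, x ^ n / (Nat.factorial n) := by
  rw [Real.exp_eq_exp_ℝ, NormedSpace.exp_eq_tsum_div]

private lemma aux_rpow_pow (x : ℝ) (hx : 0 ≤ x) (n : ℕ) (hn : n ≠ 0) :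
    (x ^ (1 / (n : ℝ))) ^ n = x := by
  rw [← Real.rpow_natCast (x ^ (1/(n:ℝ))) n, ← Real.rpow_mul hx,
    one_div_mul_cancel (by exact_mod_cast hn), Real.rpow_one]

private lemma aux_stirling : ∀ m : ℕ, 1 ≤ m →
    Real.exp m ≤ Real.exp 1 * m * ((m : ℝ) ^ m / (Nat.factorial m)) := by
  intro m
  induction m with
  | zero => intro h; omega
  | succ k ih =>
    intro _
    rcases Nat.lt_or_ge k 1 with h | hk
    · interval_cases k
      simp [Nat.factorial]
    · have IH := ih hk
      have hkR : (0:ℝ) < k := by exact_mod_cast hk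
      have hk1 : (0:ℝ) < (k:ℝ)+1 := by positivity
      have key : Real.exp 1 ≤ (((k:ℝ)+1)/k) ^ (k+1) := by
        have h1 := Real.add_one_le_exp (-(1/((k:ℝ)+1)))
        have hker : -(1/((k:ℝ)+1)) + 1 = k/(k+1) := by field_simp; ring
        rw [hker] at h1
        have hpos : (0:ℝ) < k/(k+1) := by positivity
        have h2 : Real.exp (1/((k:ℝ)+1)) ≤ ((k:ℝ)+1)/k := by
          rw [Real.exp_neg] at h1
          have h3 := inv_anti₀ hpos h1
          rw [inv_inv] at h3
          calc Real.exp (1/((k:ℝ)+1)) ≤ (k/((k:ℝ)+1))⁻¹ := h3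
            _ = ((k:ℝ)+1)/k := by rw [inv_div]
        calc Real.exp 1 = Real.exp (1/((k:ℝ)+1)) ^ (k+1) := by
              rw [← Real.exp_nat_mul]
              push_cast
              rw [mul_one_div, div_self (by positivity)]
          _ ≤ (((k:ℝ)+1)/k) ^ (k+1) := pow_le_pow_left₀ (Real.exp_nonneg _) h2 _
      have hfact : (0:ℝ) < (Nat.factorial k : ℝ) := by
        exact_mod_cast Nat.factorial_pos k
      have hmain : Real.exp 1 * (k:ℝ) * ((k:ℝ)^k) ≤ ((k:ℝ)+1)^(k+1) := by
        have h5 : Real.exp 1 * ((k:ℝ)^(k+1)) ≤ ((k:ℝ)+1)^(k+1) := by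
          have h6 := mul_le_mul_of_nonneg_right key (by positivity : (0:ℝ) ≤ (k:ℝ)^(k+1))
          calc Real.exp 1 * ((k:ℝ)^(k+1)) ≤ (((k:ℝ)+1)/k)^(k+1) * (k:ℝ)^(k+1) := h6
            _ = ((k:ℝ)+1)^(k+1) := by
                rw [div_pow, div_mul_cancel₀]
                positivity
        calc Real.exp 1 * (k:ℝ) * ((k:ℝ)^k) = Real.exp 1 * ((k:ℝ)^(k+1)) := by ring
          _ ≤ _ := h5
      have step : Real.exp ((k:ℝ)+1) ≤
          Real.exp 1 * (Real.exp 1 * (k:ℝ) * ((k:ℝ)^k)) / (Nat.factorial k) := by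
        rw [Real.exp_add]
        calc Real.exp (k:ℝ) * Real.exp 1
            ≤ (Real.exp 1 * k * ((k:ℝ)^k / (Nat.factorial k))) * Real.exp 1 :=
              mul_le_mul_of_nonneg_right IH (Real.exp_nonneg 1)
          _ = Real.exp 1 * (Real.exp 1 * (k:ℝ) * ((k:ℝ)^k)) / (Nat.factorial k) := by ring
      push_cast
      calc Real.exp ((k:ℝ)+1)
          ≤ Real.exp 1 * (Real.exp 1 * (k:ℝ) * ((k:ℝ)^k)) / (Nat.factorial k) := step
        _ ≤ Real.exp 1 * (((k:ℝ)+1)^(k+1)) / (Nat.factorial k) := by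
            gcongr
        _ = Real.exp 1 * ((k:ℝ)+1) * (((k:ℝ)+1)^(k+1) / (Nat.factorial (k+1))) := by
            rw [Nat.factorial_succ]
            push_cast
            field_simp

private lemma aux_summable (a : ℕ → ℝ) (B : ℝ)
    (h : ∀ᶠ n in Filter.atTop, |a n| ≤ B ^ n) (t : ℝ) :
    Summable (fun n : ℕ => a n * t ^ n / (Nat.factorial n)) := by
  apply Summable.of_norm_bounded_eventually (g := fun n => (B * |t|) ^ n / (Nat.factorial n))
    (Real.summable_pow_div_factorial (B * |t|))
  rw [Nat.cofinite_eq_atTop]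
  filter_upwards [h] with n hn
  have hfac : (0:ℝ) < (Nat.factorial n : ℝ) := by exact_mod_cast Nat.factorial_pos n
  rw [Real.norm_eq_abs, abs_div, abs_mul, abs_pow, abs_of_pos hfac, mul_pow]
  gcongr

private lemma aux_head (a : ℕ → ℝ) (N : ℕ) (t : ℝ) (ht : 1 ≤ t) :
    |∑ n ∈ Finset.range N, a n * t ^ n / (Nat.factorial n)| ≤
      (∑ n ∈ Finset.range N, |a n|) * t ^ N := by
  have ht0 : (0:ℝ) ≤ t := le_trans zero_le_one ht
  calc |∑ n ∈ Finset.range N, a n * t ^ n / (Nat.factorial n)|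
      ≤ ∑ n ∈ Finset.range N, |a n * t ^ n / (Nat.factorial n)| :=
        Finset.abs_sum_le_sum_abs _ _
    _ ≤ ∑ n ∈ Finset.range N, |a n| * t ^ N := by
        apply Finset.sum_le_sum
        intro n hn
        have hfac : (1:ℝ) ≤ (Nat.factorial n : ℝ) := by
          exact_mod_cast Nat.one_le_iff_ne_zero.mpr (Nat.factorial_pos n).ne'
        rw [abs_div, abs_mul, abs_pow, abs_of_nonneg ht0,
          abs_of_nonneg (by linarith : (0:ℝ) ≤ (Nat.factorial n:ℝ))]
        calc |a n| * t ^ n / (Nat.factorial n) ≤ |a n| * t ^ n / 1 := by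
              gcongr
          _ = |a n| * t ^ n := by ring
          _ ≤ |a n| * t ^ N := by
              gcongr
              · exact (Finset.mem_range.mp hn).le
    _ = (∑ n ∈ Finset.range N, |a n|) * t ^ N := by rw [Finset.sum_mul]

private lemma aux_lower (a : ℕ → ℝ) (N₀ : ℕ) (hN₀ : ∀ n, N₀ ≤ n → 0 ≤ a n)
    (t : ℝ) (ht : 1 ≤ t)
    (hsum : Summable (fun n : ℕ => a n * t ^ n / (Nat.factorial n)))
    (m : ℕ) (hm : N₀ ≤ m) :
    a m * t ^ m / (Nat.factorial m) - (∑ n ∈ Finset.range N₀, |a n|) * t ^ N₀ ≤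
      ∑' n : ℕ, a n * t ^ n / (Nat.factorial n) := by
  have ht0 : (0:ℝ) ≤ t := le_trans zero_le_one ht
  set f : ℕ → ℝ := fun n => a n * t ^ n / (Nat.factorial n) with hf
  have hsplit := Summable.sum_add_tsum_nat_add (m+1) hsum
  have htail : 0 ≤ ∑' n : ℕ, f (n + (m+1)) := by
    apply tsum_nonneg
    intro n
    have : 0 ≤ a (n + (m+1)) := hN₀ _ (by omega)
    positivity
  have hhead : a m * t ^ m / (Nat.factorial m) - (∑ n ∈ Finset.range N₀, |a n|) * t ^ N₀ ≤
      ∑ n ∈ Finset.range (m+1), f n := by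
    have h1 : ∑ n ∈ Finset.range (m+1), f n
        = ∑ n ∈ Finset.range N₀, f n + ∑ n ∈ Finset.Ico N₀ (m+1), f n := by
      rw [Finset.range_eq_Ico, ← Finset.sum_Ico_consecutive _ (Nat.zero_le N₀) (by omega : N₀ ≤ m+1),
        ← Finset.range_eq_Ico]
    have h2 : f m ≤ ∑ n ∈ Finset.Ico N₀ (m+1), f n := by
      apply Finset.single_le_sum (f := f) ?_ (by simp [Finset.mem_Ico]; omega)
      intro i hi
      have : 0 ≤ a i := hN₀ i (Finset.mem_Ico.mp hi).1
      have hfac : (0:ℝ) < (Nat.factorial i : ℝ) := by exact_mod_cast Nat.factorial_pos i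
      positivity
    have h3 : -((∑ n ∈ Finset.range N₀, |a n|) * t ^ N₀) ≤ ∑ n ∈ Finset.range N₀, f n := by
      have := aux_head a N₀ t ht
      have := neg_abs_le (∑ n ∈ Finset.range N₀, f n)
      simp only [hf] at *
      linarith
    rw [h1]
    simp only [hf] at *
    linarith
  linarith [hsplit, htail, hhead]

private lemma aux_upper (a : ℕ → ℝ) (c : ℝ) (hc : 0 ≤ c) (N : ℕ)
    (hN : ∀ n, N ≤ n → |a n| ≤ c ^ n) (t : ℝ) (ht : 1 ≤ t)
    (hsum : Summable (fun n : ℕ => a n * t ^ n / (Nat.factorial n))) :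
    ∑' n : ℕ, a n * t ^ n / (Nat.factorial n) ≤
      (∑ n ∈ Finset.range N, |a n|) * t ^ N + Real.exp (c * t) := by
  have ht0 : (0:ℝ) < t := lt_of_lt_of_le zero_lt_one ht
  set g : ℕ → ℝ := fun n => |a n| * t ^ n / (Nat.factorial n) with hg
  have hgsum : Summable g := by
    have := hsum.abs
    apply this.congr
    intro n
    have hfac : (0:ℝ) < (Nat.factorial n : ℝ) := by exact_mod_cast Nat.factorial_pos n
    simp only [hg, abs_div, abs_mul, abs_pow, abs_of_pos ht0, abs_of_pos hfac]
  have h1 : ∑' n : ℕ, a n * t ^ n / (Nat.factorial n) ≤ ∑' n, g n := by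
    refine Summable.tsum_le_tsum (f := fun n : ℕ => a n * t ^ n / (Nat.factorial n)) (g := g) ?_ hsum hgsum
    intro n
    have hfac : (0:ℝ) < (Nat.factorial n : ℝ) := by exact_mod_cast Nat.factorial_pos n
    have : a n ≤ |a n| := le_abs_self _
    have h2 : (0:ℝ) ≤ t ^ n := by positivity
    simp only [hg]
    gcongr
  have hsplit := Summable.sum_add_tsum_nat_add N hgsum
  have hesum : Summable (fun n : ℕ => (c*t) ^ n / (Nat.factorial n)) :=
    Real.summable_pow_div_factorial _
  have htail : ∑' n : ℕ, g (n + N) ≤ Real.exp (c * t) := by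
    rw [aux_exp_tsum (c*t)]
    have hstep : ∑' n : ℕ, g (n + N) ≤ ∑' n : ℕ, (c*t) ^ (n+N) / (Nat.factorial (n+N)) := by
      refine Summable.tsum_le_tsum (f := fun n : ℕ => g (n + N))
        (g := fun n : ℕ => (c*t) ^ (n+N) / (Nat.factorial (n+N))) ?_
        ((summable_nat_add_iff N).mpr hgsum) ((summable_nat_add_iff N).mpr hesum)
      intro n
      have hfac : (0:ℝ) < (Nat.factorial (n+N) : ℝ) := by exact_mod_cast Nat.factorial_pos _
      simp only [hg, mul_pow]
      have h5 : |a (n+N)| * t ^ (n+N) ≤ c ^ (n+N) * t ^ (n+N) := by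
        apply mul_le_mul_of_nonneg_right (hN _ (by omega)) (by positivity)
      exact div_le_div_of_nonneg_right h5 hfac.le |>.trans (le_of_eq rfl)
    refine hstep.trans ?_
    have := Summable.sum_add_tsum_nat_add N hesum
    have hhead : 0 ≤ ∑ n ∈ Finset.range N, (c*t) ^ n / (Nat.factorial n) := by
      apply Finset.sum_nonneg
      intro i _
      have hfac : (0:ℝ) < (Nat.factorial i : ℝ) := by exact_mod_cast Nat.factorial_pos _
      positivity
    linarith
  have hheadbd : ∑ n ∈ Finset.range N, g n ≤ (∑ n ∈ Finset.range N, |a n|) * t ^ N := by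
    rw [Finset.sum_mul]
    apply Finset.sum_le_sum
    intro n hn
    have hfac : (1:ℝ) ≤ (Nat.factorial n : ℝ) := by
      exact_mod_cast (Nat.factorial_pos n)
    simp only [hg]
    calc |a n| * t ^ n / (Nat.factorial n) ≤ |a n| * t ^ n / 1 := by gcongr
      _ = |a n| * t ^ n := by ring
      _ ≤ |a n| * t ^ N := by
          gcongr
          · exact (Finset.mem_range.mp hn).le
  linarith

/-- Let `(aₙ)` be reals with `aₙ ≥ 0` for all but finitely many `n`, and suppose
`T := limsup |aₙ|^(1/n)` is finite and strictly positive. With `G(t) = ∑ aₙ tⁿ/n!`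
(which converges for every real `t`), one has `G(t) > 0` for all sufficiently large `t > 0`
and `limsup_{t→∞} (log G(t))/t = T`. -/
theorem stmt_12 (a : ℕ → ℝ) (ha : ∀ᶠ n in Filter.cofinite, 0 ≤ a n)
    (T : ℝ) (hTpos : 0 < T)
    (hT : Filter.limsup (fun n : ℕ => |a n| ^ (1 / (n : ℝ))) Filter.atTop = T) :
    (∀ t : ℝ, Summable (fun n : ℕ => a n * t ^ n / (Nat.factorial n))) ∧
    (∀ᶠ t in Filter.atTop, 0 < ∑' n : ℕ, a n * t ^ n / (Nat.factorial n)) ∧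
    Filter.limsup
      (fun t : ℝ => Real.log (∑' n : ℕ, a n * t ^ n / (Nat.factorial n)) / t)
      Filter.atTop = T := by
  set u : ℕ → ℝ := fun n => |a n| ^ (1 / (n:ℝ)) with hu
  have hu0 : ∀ n, 0 ≤ u n := fun n => Real.rpow_nonneg (abs_nonneg _) _
  have hbdd : IsBoundedUnder (· ≤ ·) atTop u := by
    by_contra hcon
    have hempty : {b : ℝ | ∀ᶠ n in atTop, u n ≤ b} = ∅ := by
      ext b
      simp only [Set.mem_setOf_eq, Set.mem_empty_iff_false, iff_false]
      intro hb
      exact hcon ⟨b, eventually_map.mpr hb⟩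
    rw [limsup_eq, hempty, Real.sInf_empty] at hT
    linarith
  have hcobdd_u : IsCoboundedUnder (· ≤ ·) atTop u :=
    IsCoboundedUnder.of_frequently_ge (a := 0) ((Eventually.of_forall hu0).frequently)
  have hT1 : ∀ ε : ℝ, 0 < ε → ∀ᶠ n in atTop, |a n| ≤ (T + ε) ^ n := by
    intro ε hε
    have h1 : ∀ᶠ n in atTop, u n < T + ε :=
      eventually_lt_of_limsup_lt (by rw [hT]; linarith) hbdd
    filter_upwards [h1, eventually_ge_atTop 1] with n hn hn1
    have h2 : |a n| = (u n) ^ n := (aux_rpow_pow _ (abs_nonneg _) n (by omega)).symm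
    rw [h2]
    exact pow_le_pow_left₀ (hu0 n) hn.le n
  have hfreq : ∀ ε : ℝ, 0 < ε → ε < T → ∃ᶠ n in atTop, (T - ε) ^ n ≤ a n := by
    intro ε hε hεT
    have h1 : ∃ᶠ n in atTop, T - ε < u n :=
      frequently_lt_of_lt_limsup hcobdd_u (by rw [hT]; linarith)
    have h2 : ∀ᶠ n in atTop, 0 ≤ a n ∧ 1 ≤ n :=
      (Nat.cofinite_eq_atTop ▸ ha).and (eventually_ge_atTop 1)
    apply (h1.and_eventually h2).mono
    rintro n ⟨hn, hpos, hn1⟩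
    have h3 : (u n) ^ n = |a n| := aux_rpow_pow _ (abs_nonneg _) n (by omega)
    have h4 : (T - ε)^n ≤ (u n)^n := pow_le_pow_left₀ (by linarith) hn.le n
    rw [h3, abs_of_nonneg hpos] at h4
    exact h4
  have hsum : ∀ t : ℝ, Summable (fun n : ℕ => a n * t ^ n / (Nat.factorial n)) :=
    fun t => aux_summable a (T+1) (hT1 1 one_pos) t
  -- N₀ and the constant C
  obtain ⟨N₀', hN₀'⟩ := eventually_atTop.mp (Nat.cofinite_eq_atTop ▸ ha)
  set N₀ : ℕ := max N₀' 1 with hN₀def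
  have hN₀ : ∀ n, N₀ ≤ n → 0 ≤ a n := fun n hn => hN₀' n (le_trans (le_max_left _ _) hn)
  set C : ℝ := ∑ n ∈ Finset.range N₀, |a n| with hCdef
  have hC : 0 ≤ C := Finset.sum_nonneg (fun i _ => abs_nonneg _)
  set G : ℝ → ℝ := fun t => ∑' n : ℕ, a n * t ^ n / (Nat.factorial n) with hG
  -- positivity
  have hpos : ∀ᶠ t in atTop, 0 < G t := by
    obtain ⟨m, hma, hmN⟩ :=
      ((hfreq (T/2) (by linarith) (by linarith)).and_eventually
        (eventually_ge_atTop (N₀+1))).exists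
    have hTm : 0 < T - T/2 := by linarith
    have ham : 0 < a m := lt_of_lt_of_le (pow_pos hTm m) hma
    have hfacm : (0:ℝ) < (Nat.factorial m : ℝ) := by exact_mod_cast Nat.factorial_pos m
    filter_upwards [eventually_ge_atTop (1:ℝ),
      eventually_gt_atTop (C * (Nat.factorial m) / a m)] with t ht htm
    have ht0 : (0:ℝ) < t := lt_of_lt_of_le zero_lt_one ht
    have hlow := aux_lower a N₀ hN₀ t ht (hsum t) m (by omega)
    have htpowpos : (0:ℝ) < t ^ N₀ := pow_pos ht0 _
    have hCam : C < a m * t / (Nat.factorial m) := by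
      rw [div_lt_iff₀ ham] at htm
      rw [lt_div_iff₀ hfacm]
      linarith [htm]
    have htpow : t^(N₀+1) ≤ t^m := pow_le_pow_right₀ ht (by omega)
    have hkey : C * t^N₀ < a m * t^m / (Nat.factorial m) := by
      calc C * t^N₀ < (a m * t / (Nat.factorial m)) * t^N₀ :=
            (mul_lt_mul_of_pos_right hCam htpowpos)
        _ = a m * t^(N₀+1) / (Nat.factorial m) := by rw [pow_succ]; ring
        _ ≤ a m * t^m / (Nat.factorial m) := by gcongr
    simp only [hG]
    linarith [hlow]
  -- upper estimate for log G t / t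
  have hL_ub : ∀ ε : ℝ, 0 < ε → ∀ᶠ t in atTop, Real.log (G t) / t ≤ T + ε := by
    intro ε hε
    set c : ℝ := T + ε/2 with hcdef
    have hc0 : 0 < c := by simp only [hcdef]; linarith
    obtain ⟨N, hN⟩ := eventually_atTop.mp (hT1 (ε/2) (by linarith))
    set C' : ℝ := ∑ n ∈ Finset.range N, |a n| with hC'def
    have htend : Tendsto (fun t : ℝ => C' * t^N * Real.exp (-(c*t))) atTop (nhds 0) := by
      have h1 : Tendsto (fun x : ℝ => x ^ N * Real.exp (-x)) atTop (nhds 0) :=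
        Real.tendsto_pow_mul_exp_neg_atTop_nhds_zero N
      have h2 : Tendsto (fun t : ℝ => c * t) atTop atTop :=
        Tendsto.const_mul_atTop hc0 tendsto_id
      have h3 := (h1.comp h2).const_mul (C'/c^N)
      rw [mul_zero] at h3
      apply h3.congr
      intro t
      simp only [Function.comp_apply]
      rw [mul_pow]
      field_simp
    have hev1 : ∀ᶠ t in atTop, C' * t^N * Real.exp (-(c*t)) < 1 :=
      htend.eventually_lt_const one_pos
    filter_upwards [hev1, hpos, eventually_ge_atTop (1:ℝ),
      eventually_ge_atTop (2 * Real.log 2 / ε)] with t h1 h2 ht3 ht4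
    have ht0 : (0:ℝ) < t := lt_of_lt_of_le zero_lt_one ht3
    have hub := aux_upper a c hc0.le N hN t ht3 (hsum t)
    have hexp : (0:ℝ) < Real.exp (c*t) := Real.exp_pos _
    have hCt : C' * t^N < Real.exp (c*t) := by
      have heq : C' * t^N = (C' * t^N * Real.exp (-(c*t))) * Real.exp (c*t) := by
        rw [Real.exp_neg]; field_simp
      rw [heq]
      nlinarith [h1, hexp]
    have hGle : G t ≤ 2 * Real.exp (c*t) := by
      simp only [hG]
      calc ∑' n : ℕ, a n * t ^ n / (Nat.factorial n) ≤ C' * t^N + Real.exp (c*t) := hub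
        _ ≤ 2 * Real.exp (c*t) := by linarith
    have hlog : Real.log (G t) ≤ Real.log 2 + c * t := by
      calc Real.log (G t) ≤ Real.log (2 * Real.exp (c*t)) := Real.log_le_log h2 hGle
        _ = Real.log 2 + c*t := by
            rw [Real.log_mul two_ne_zero (Real.exp_ne_zero _), Real.log_exp]
    rw [div_le_iff₀ ht0]
    have hlog2 : Real.log 2 ≤ ε/2 * t := by
      have h2' : 0 ≤ Real.log 2 := Real.log_nonneg one_le_two
      rw [div_le_iff₀ hε] at ht4
      linarith
    simp only [hcdef] at hlog
    nlinarith [hlog, hlog2]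
  -- lower frequent estimate
  have hL_lb : ∀ ε : ℝ, 0 < ε → ε < T → ∃ᶠ t in atTop, T - ε ≤ Real.log (G t) / t := by
    intro ε hε hεT
    set δ : ℝ := ε/2 with hδdef
    have hδ0 : 0 < δ := by simp only [hδdef]; linarith
    set c : ℝ := T - δ with hcdef
    have hc0 : 0 < c := by simp only [hcdef, hδdef]; linarith
    have hδT : δ < T := by simp only [hδdef]; linarith
    -- E2 : eventual smallness of log term
    have hE2 : ∀ᶠ x : ℝ in atTop, c * (1 + Real.log 2 + Real.log x) ≤ δ * x := by
      have hlogdiv : Tendsto (fun x:ℝ => Real.log x / x) atTop (nhds 0) := by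
        have := Real.tendsto_pow_log_div_mul_add_atTop 1 0 1 one_ne_zero
        simpa using this
      have hinv : Tendsto (fun x:ℝ => 1/x) atTop (nhds 0) := by
        simpa using tendsto_inv_atTop_zero (𝕜 := ℝ)
      have hcomb : Tendsto (fun x:ℝ => c * ((1 + Real.log 2) * (1/x) + Real.log x / x))
          atTop (nhds 0) := by
        have := ((hinv.const_mul (1 + Real.log 2)).add hlogdiv).const_mul c
        simpa using this
      have hev := hcomb.eventually_lt_const hδ0
      filter_upwards [hev, eventually_gt_atTop (0:ℝ)] with x hx hx0
      have heq : c * ((1 + Real.log 2) * (1/x) + Real.log x / x)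
          = c * (1 + Real.log 2 + Real.log x) / x := by
        field_simp
      rw [heq] at hx
      rw [div_lt_iff₀ hx0] at hx
      linarith
    have hE2n : ∀ᶠ n : ℕ in atTop, c * (1 + Real.log 2 + Real.log n) ≤ δ * n :=
      tendsto_natCast_atTop_atTop.eventually hE2
    -- E1 : eventual domination of polynomial by exponential
    set K : ℝ := 2 * Real.exp 1 * C / c^N₀ with hKdef
    have hK : 0 ≤ K := by
      simp only [hKdef]
      positivity
    have hE1r : ∀ᶠ x : ℝ in atTop, K * x^(N₀+1) * Real.exp (-x) < 1 := by
      have h1 : Tendsto (fun x : ℝ => K * (x ^ (N₀+1) * Real.exp (-x))) atTop (nhds 0) := by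
        have := (Real.tendsto_pow_mul_exp_neg_atTop_nhds_zero (N₀+1)).const_mul K
        simpa using this
      have h1' : Tendsto (fun x : ℝ => K * x^(N₀+1) * Real.exp (-x)) atTop (nhds 0) := by
        apply h1.congr
        intro x
        ring
      exact h1'.eventually_lt_const one_pos
    have hE1 : ∀ᶠ n : ℕ in atTop,
        C * ((n:ℝ)/c)^N₀ ≤ Real.exp n / (Real.exp 1 * n) / 2 := by
      filter_upwards [tendsto_natCast_atTop_atTop.eventually hE1r,
        eventually_ge_atTop 1] with n h1 hn1
      have hnpos : (0:ℝ) < n := by exact_mod_cast hn1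
      have hexpn : (0:ℝ) < Real.exp n := Real.exp_pos _
      have h3 : K * (n:ℝ)^(N₀+1) < Real.exp n := by
        have heq : K * (n:ℝ)^(N₀+1)
            = (K * (n:ℝ)^(N₀+1) * Real.exp (-(n:ℝ))) * Real.exp n := by
          rw [Real.exp_neg]; field_simp
        rw [heq]
        nlinarith [h1, hexpn]
      rw [div_div, le_div_iff₀ (by positivity : (0:ℝ) < Real.exp 1 * n * 2)]
      have heq2 : C * ((n:ℝ)/c)^N₀ * (Real.exp 1 * n * 2) = K * (n:ℝ)^(N₀+1) := by
        simp only [hKdef]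
        rw [div_pow, pow_succ]
        field_simp
      rw [heq2]
      exact h3.le
    -- combine frequently
    rw [frequently_atTop]
    intro b
    have hev_all : ∀ᶠ n : ℕ in atTop,
        (c * (1 + Real.log 2 + Real.log n) ≤ δ * n) ∧
        (C * ((n:ℝ)/c)^N₀ ≤ Real.exp n / (Real.exp 1 * n) / 2) ∧
        (N₀ ≤ n ∧ 1 ≤ n) ∧
        (max c (b * c) ≤ (n:ℝ)) := by
      refine hE2n.and (hE1.and (((eventually_ge_atTop N₀).and (eventually_ge_atTop 1)).and
        (tendsto_natCast_atTop_atTop.eventually (eventually_ge_atTop _))))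
    obtain ⟨n, hn_a, hn_E2, hn_E1, ⟨hn_N₀, hn_1⟩, hn_big⟩ :=
      ((hfreq δ hδ0 hδT).and_eventually hev_all).exists
    set t : ℝ := (n:ℝ)/c with htdef
    have hnpos : (0:ℝ) < n := by exact_mod_cast hn_1
    have ht1 : 1 ≤ t := by
      rw [htdef, le_div_iff₀ hc0, one_mul]
      exact le_trans (le_max_left _ _) hn_big
    have ht0 : (0:ℝ) < t := lt_of_lt_of_le zero_lt_one ht1
    have htb : b ≤ t := by
      rw [htdef, le_div_iff₀ hc0]
      exact le_trans (le_max_right _ _) hn_big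
    refine ⟨t, htb, ?_⟩
    have hct : c * t = n := by
      rw [htdef]
      field_simp
    have hfacn : (0:ℝ) < (Nat.factorial n : ℝ) := by exact_mod_cast Nat.factorial_pos n
    have hlow := aux_lower a N₀ hN₀ t ht1 (hsum t) n hn_N₀
    have hterm : (n:ℝ)^n / (Nat.factorial n) ≤ a n * t^n / (Nat.factorial n) := by
      have heqn : (n:ℝ)^n = c^n * t^n := by rw [← mul_pow, hct]
      rw [heqn]
      exact div_le_div_of_nonneg_right
        (mul_le_mul_of_nonneg_right hn_a (pow_nonneg ht0.le n)) hfacn.le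
    have hstir := aux_stirling n hn_1
    set P : ℝ := Real.exp n / (Real.exp 1 * n) with hPdef
    have hPpos : 0 < P := by
      simp only [hPdef]
      positivity
    have hstir' : P ≤ (n:ℝ)^n / (Nat.factorial n) := by
      rw [hPdef, div_le_iff₀ (by positivity : (0:ℝ) < Real.exp 1 * n)]
      calc Real.exp n ≤ Real.exp 1 * n * ((n:ℝ)^n / (Nat.factorial n)) := hstir
        _ = (n:ℝ)^n / (Nat.factorial n) * (Real.exp 1 * n) := by ring
    have hE1' : C * t^N₀ ≤ P/2 := hn_E1
    have hG2 : P/2 ≤ G t := by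
      simp only [hG]
      linarith [hlow, hterm, hstir', hE1']
    have hGpos : 0 < G t := lt_of_lt_of_le (by positivity) hG2
    have hlogG : Real.log (P/2) ≤ Real.log (G t) := Real.log_le_log (by positivity) hG2
    have hlogP : Real.log (P/2) = (n:ℝ) - (1 + Real.log 2 + Real.log n) := by
      rw [Real.log_div (ne_of_gt hPpos) two_ne_zero, hPdef,
        Real.log_div (Real.exp_ne_zero _) (by positivity : Real.exp 1 * (n:ℝ) ≠ 0),
        Real.log_mul (Real.exp_ne_zero 1) (ne_of_gt hnpos), Real.log_exp, Real.log_exp]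
      ring
    rw [le_div_iff₀ ht0]
    have hsδ : 1 + Real.log 2 + Real.log n ≤ δ * t := by
      have h5 : c * (1 + Real.log 2 + Real.log n) ≤ δ * (c * t) := by
        rw [hct]; exact hn_E2
      nlinarith [hc0]
    have hfin : (T - ε) * t ≤ (n:ℝ) - (1 + Real.log 2 + Real.log n) := by
      have hTεc : T - ε = c - δ := by simp only [hcdef, hδdef]; ring
      rw [hTεc]
      have : (c - δ) * t = c * t - δ * t := by ring
      rw [this, hct]
      linarith
    calc (T - ε) * t ≤ (n:ℝ) - (1 + Real.log 2 + Real.log n) := hfin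
      _ = Real.log (P/2) := hlogP.symm
      _ ≤ Real.log (G t) := hlogG
  -- assembling
  refine ⟨hsum, hpos, ?_⟩
  set L : ℝ → ℝ := fun t => Real.log (G t) / t with hLdef
  have hfreqL : ∃ᶠ t in atTop, T/2 ≤ L t := by
    have h := hL_lb (T/2) (by linarith) (by linarith)
    have heq : T - T/2 = T/2 := by ring
    rw [heq] at h
    exact h
  have hcobL : IsCoboundedUnder (· ≤ ·) atTop L :=
    IsCoboundedUnder.of_frequently_ge hfreqL
  have hbddL : IsBoundedUnder (· ≤ ·) atTop L :=
    ⟨T+1, eventually_map.mpr (hL_ub 1 one_pos)⟩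
  apply le_antisymm
  · apply le_of_forall_pos_le_add
    intro ε hε
    exact limsup_le_of_le hcobL (hL_ub ε hε)
  · apply le_of_forall_sub_le
    intro ε hε
    set ε' : ℝ := min ε (T/2) with hε'def
    have hε'0 : 0 < ε' := lt_min hε (by linarith)
    have hε'T : ε' < T := lt_of_le_of_lt (min_le_right _ _) (by linarith)
    have hfr : ∃ᶠ t in atTop, T - ε' ≤ L t := hL_lb ε' hε'0 hε'T
    have h1 : T - ε' ≤ limsup L atTop := le_limsup_of_frequently_le hfr hbddL
    have h2 : ε' ≤ ε := min_le_left _ _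
    linarith
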